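/- arXiv:2204.09035 — 3 statements merged into one kernel-verified Lean document; each statement's English description precedes it below -/
import Mathlib

section
/- Let G be a finite simple graph, S, T ⊆ V(G), and let X = ∂(S) ∪ (T ∩ S), where ∂(S) is the set of vertices of S having a neighbor in V(G) ∖ S. Let H be a finite simple graph with V(H) ∩ V(G) = X such that B_H(X) = B_{G[S]}(X). Let G' be the graph obtained from G by replacing G[S] by H, i.e., V(G') = (V(G) ∖ (S ∖ X)) ∪ V(H) and E(G') = {e ∈ E(G) : not both endpoints of e lie in S} ∪ E(H). Then B_G(T) = B_{G'}(T). -/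
open scoped Classical

/-- A finite simple graph on a subset of an ambient vertex type `U`. -/
structure FinGraph (U : Type) where
  verts : Finset U
  G : SimpleGraph U
  support : ∀ ⦃u v : U⦄, G.Adj u v → u ∈ verts ∧ v ∈ verts

/-- The restriction (induced subgraph) of a `SimpleGraph` to a finite vertex set. -/
def SimpleGraph.restrictTo {U : Type} (G : SimpleGraph U) (s : Finset U) : SimpleGraph U where
  Adj u v := G.Adj u v ∧ u ∈ s ∧ v ∈ s
  symm := ⟨fun u v h => ⟨h.1.symm, h.2.2, h.2.1⟩⟩
  loopless := ⟨fun u h => G.loopless.irrefl u h.1⟩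

/-- The boundary `∂(S)` of `S` in `G`: vertices of `S` with a neighbor outside `S`. -/
noncomputable def FinGraph.bdry {U : Type} [DecidableEq U] (G : FinGraph U) (S : Finset U) :
    Finset U :=
  S.filter fun v => ∃ u, G.G.Adj v u ∧ u ∉ S

/-- The set of bipartitions `B_G(S)`: subsets `S' ⊆ S` for which some proper 2-coloring of `G`
colors all of `S'` with `true` and all of `S ∖ S'` with `false`. -/
def Bip {U : Type} [DecidableEq U] (G : SimpleGraph U) (S : Finset U) : Set (Finset U) :=
  {S' | S' ⊆ S ∧ ∃ c : U → Bool, (∀ ⦃u v⦄, G.Adj u v → c u ≠ c v) ∧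
    (∀ v ∈ S', c v = true) ∧ ∀ v ∈ S \ S', c v = false}

/-- for `X = ∂(S) ∪ (T ∩ S)`, if `H` (with `V(H) ∩ V(G) = X`) satisfies
`B_H(X) = B_{G[S]}(X)` and `G'` is obtained from `G` by replacing `G[S]` by `H`, then
`B_G(T) = B_{G'}(T)`. -/
theorem replace_subgraph_keeps_bipartitions {U : Type} [DecidableEq U]
    (G : FinGraph U) (S T : Finset U) (hS : S ⊆ G.verts) (hT : T ⊆ G.verts)
    (H : FinGraph U)
    (hHG : H.verts ∩ G.verts = G.bdry S ∪ (T ∩ S))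
    (hBip : Bip H.G (G.bdry S ∪ (T ∩ S)) =
      Bip (G.G.restrictTo S) (G.bdry S ∪ (T ∩ S)))
    (G' : FinGraph U)
    (hG'verts : G'.verts = (G.verts \ (S \ (G.bdry S ∪ (T ∩ S)))) ∪ H.verts)
    (hG'adj : ∀ a b : U, G'.G.Adj a b ↔
      ((G.G.Adj a b ∧ ¬(a ∈ S ∧ b ∈ S)) ∨ H.G.Adj a b)) :
    Bip G.G T = Bip G'.G T := by
  set X := G.bdry S ∪ (T ∩ S) with hXdef
  have hXS : X ⊆ S := by
    intro v hv
    rcases Finset.mem_union.1 hv with h | h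
    · exact (Finset.mem_filter.1 h).1
    · exact (Finset.mem_inter.1 h).2
  have hTSX : ∀ v, v ∈ T → v ∈ S → v ∈ X := fun v hvT hvS =>
    Finset.mem_union_right _ (Finset.mem_inter.2 ⟨hvT, hvS⟩)
  have hbdryX : ∀ v u, v ∈ S → G.G.Adj v u → u ∉ S → v ∈ X := fun v u hv hadj hu =>
    Finset.mem_union_left _ (Finset.mem_filter.2 ⟨hv, u, hadj, hu⟩)
  ext S'
  simp only [Bip, Set.mem_setOf_eq]
  constructor
  · rintro ⟨hS'T, c, hc, hc1, hc0⟩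
    refine ⟨hS'T, ?_⟩
    have hX' : (X.filter fun v => c v = true) ∈ Bip (G.G.restrictTo S) X := by
      refine ⟨Finset.filter_subset _ _, c, fun u v h => hc h.1, ?_, ?_⟩
      · intro v hv; exact (Finset.mem_filter.1 hv).2
      · intro v hv
        have hnot := (Finset.mem_sdiff.1 hv).2
        cases hcv : c v with
        | false => rfl
        | true =>
          exact absurd (Finset.mem_filter.2 ⟨(Finset.mem_sdiff.1 hv).1, hcv⟩) hnot
    rw [← hBip] at hX'
    obtain ⟨_, d, hd, hd1, hd0⟩ := hX'
    have hagree : ∀ v ∈ X, d v = c v := by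
      intro v hv
      cases hcv : c v with
      | false =>
        refine hd0 v (Finset.mem_sdiff.2 ⟨hv, fun h => ?_⟩)
        have := (Finset.mem_filter.1 h).2
        rw [hcv] at this; exact Bool.false_ne_true this
      | true => exact hd1 v (Finset.mem_filter.2 ⟨hv, hcv⟩)
    refine ⟨fun u => if u ∈ G.verts then c u else d u, ?_, ?_, ?_⟩
    · intro a b hab
      rcases (hG'adj a b).1 hab with ⟨hadj, _⟩ | hadj
      · have ha := (G.support hadj).1
        have hb := (G.support hadj).2
        simpa [ha, hb] using hc hadj
      · have ha := (H.support hadj).1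
        have hb := (H.support hadj).2
        have key : ∀ u, u ∈ H.verts → (if u ∈ G.verts then c u else d u) = d u := by
          intro u hu
          by_cases h : u ∈ G.verts
          · simp only [h, if_true]
            exact (hagree u (hHG ▸ Finset.mem_inter.2 ⟨hu, h⟩)).symm
          · simp [h]
        simp only [key a ha, key b hb]
        exact hd hadj
    · intro v hv
      show (if v ∈ G.verts then c v else d v) = true
      rw [if_pos (hT (hS'T hv))]; exact hc1 v hv
    · intro v hv
      show (if v ∈ G.verts then c v else d v) = false
      rw [if_pos (hT (Finset.mem_sdiff.1 hv).1)]; exact hc0 v hv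
  · rintro ⟨hS'T, c, hc, hc1, hc0⟩
    refine ⟨hS'T, ?_⟩
    have hX' : (X.filter fun v => c v = true) ∈ Bip H.G X := by
      refine ⟨Finset.filter_subset _ _, c,
        fun u v h => hc ((hG'adj u v).2 (Or.inr h)), ?_, ?_⟩
      · intro v hv; exact (Finset.mem_filter.1 hv).2
      · intro v hv
        have hnot := (Finset.mem_sdiff.1 hv).2
        cases hcv : c v with
        | false => rfl
        | true =>
          exact absurd (Finset.mem_filter.2 ⟨(Finset.mem_sdiff.1 hv).1, hcv⟩) hnot
    rw [hBip] at hX'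
    obtain ⟨_, d, hd, hd1, hd0⟩ := hX'
    have hagree : ∀ v ∈ X, d v = c v := by
      intro v hv
      cases hcv : c v with
      | false =>
        refine hd0 v (Finset.mem_sdiff.2 ⟨hv, fun h => ?_⟩)
        have := (Finset.mem_filter.1 h).2
        rw [hcv] at this; exact Bool.false_ne_true this
      | true => exact hd1 v (Finset.mem_filter.2 ⟨hv, hcv⟩)
    refine ⟨fun u => if u ∈ S then d u else c u, ?_, ?_, ?_⟩
    · intro a b hab
      by_cases hboth : a ∈ S ∧ b ∈ S
      · simp only [hboth.1, hboth.2, if_true]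
        exact hd ⟨hab, hboth.1, hboth.2⟩
      · have hG'ab : G'.G.Adj a b := (hG'adj a b).2 (Or.inl ⟨hab, hboth⟩)
        have ka : (if a ∈ S then d a else c a) = c a := by
          by_cases ha : a ∈ S
          · have hb : b ∉ S := fun hb => hboth ⟨ha, hb⟩
            simp [ha, hagree a (hbdryX a b ha hab hb)]
          · simp [ha]
        have kb : (if b ∈ S then d b else c b) = c b := by
          by_cases hb : b ∈ S
          · have ha : a ∉ S := fun ha => hboth ⟨ha, hb⟩
            simp [hb, hagree b (hbdryX b a hb hab.symm ha)]
          · simp [hb]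
        simp only [ka, kb]
        exact hc hG'ab
    · intro v hv
      show (if v ∈ S then d v else c v) = true
      by_cases hvS : v ∈ S
      · rw [if_pos hvS, hagree v (hTSX v (hS'T hv) hvS)]; exact hc1 v hv
      · rw [if_neg hvS]; exact hc1 v hv
    · intro v hv
      have hvT : v ∈ T := (Finset.mem_sdiff.1 hv).1
      show (if v ∈ S then d v else c v) = false
      by_cases hvS : v ∈ S
      · rw [if_pos hvS, hagree v (hTSX v hvT hvS)]; exact hc0 v hv
      · rw [if_neg hvS]; exact hc0 v hv
end

section
/- Let G be a finite simple graph and 𝓡 a finite family of subsets of V(G) (called regions) such that every vertex of G lies in some region and every edge of G has both endpoints in some common region. For R ∈ 𝓡, let ∂(R) = R ∩ ⋃_{R' ∈ 𝓡, R' ≠ R} R' be the set of vertices of R shared with other regions. Let ∇ ⊆ V(G) be a set of marked vertices and set ∇(R) = ∂(R) ∪ (∇ ∩ R). For each R ∈ 𝓡 let H_R be a finite simple graph with V(H_R) ∩ V(G) = ∇(R), with the new vertex sets V(H_R) ∖ V(G) pairwise disjoint over distinct regions, such that for all x, y ∈ ∇(R): x and y are connected in H_R if and only if x and y are connected in the induced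 subgraph G[R]. Then for all u, v ∈ ⋃_{R ∈ 𝓡} ∇(R): u and v are connected in the union graph H = ⋃_{R ∈ 𝓡} H_R if and only if u and v are connected in G. -/
open scoped Classical

/-- The boundary `∂(R)` of a region `R` with respect to a family `𝓡` of regions:
the vertices of `R` lying in some other region of `𝓡`. -/
noncomputable def bdryIn {U : Type} [DecidableEq U] (𝓡 : Finset (Finset U)) (R : Finset U) :
    Finset U :=
  R.filter fun v => ∃ R' ∈ 𝓡, R' ≠ R ∧ v ∈ R'

/-- given a division `𝓡` of `G`, a set `∇` of marked vertices,
`∇(R) = ∂(R) ∪ (∇ ∩ R)`, and graphs `H_R` (with `V(H_R) ∩ V(G) = ∇(R)` and pairwise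
disjoint new vertices) preserving connectivity between vertices of `∇(R)` within `G[R]`,
two vertices of `⋃_R ∇(R)` are connected in `⋃_R H_R` iff they are connected in `G`. -/
theorem union_of_connectors_preserves_connectivity {U : Type} [DecidableEq U]
    (G : FinGraph U) (𝓡 : Finset (Finset U))
    (hsub : ∀ R ∈ 𝓡, R ⊆ G.verts)
    (hcover : ∀ v ∈ G.verts, ∃ R ∈ 𝓡, v ∈ R)
    (hedge : ∀ ⦃u v⦄, G.G.Adj u v → ∃ R ∈ 𝓡, u ∈ R ∧ v ∈ R)
    (nab : Finset U) (hnab : nab ⊆ G.verts)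
    (H : Finset U → FinGraph U)
    (hHverts : ∀ R ∈ 𝓡, (H R).verts ∩ G.verts = bdryIn 𝓡 R ∪ (nab ∩ R))
    (hHdisj : ∀ R ∈ 𝓡, ∀ R' ∈ 𝓡, R ≠ R' →
      Disjoint ((H R).verts \ G.verts) ((H R').verts \ G.verts))
    (hHconn : ∀ R ∈ 𝓡, ∀ x ∈ bdryIn 𝓡 R ∪ (nab ∩ R), ∀ y ∈ bdryIn 𝓡 R ∪ (nab ∩ R),
      ((H R).G.Reachable x y ↔ (G.G.restrictTo R).Reachable x y))
    (u v : U)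
    (hu : ∃ R ∈ 𝓡, u ∈ bdryIn 𝓡 R ∪ (nab ∩ R))
    (hv : ∃ R ∈ 𝓡, v ∈ bdryIn 𝓡 R ∪ (nab ∩ R)) :
    (⨆ R ∈ 𝓡, (H R).G).Reachable u v ↔ G.G.Reachable u v := by

  classical
  have hnsubR : ∀ R : Finset U, bdryIn 𝓡 R ∪ (nab ∩ R) ⊆ R := by
    intro R w hw
    rcases Finset.mem_union.1 hw with h | h
    · exact (Finset.mem_filter.1 h).1
    · exact (Finset.mem_inter.1 h).2
  have hnsubG : ∀ R ∈ 𝓡, bdryIn 𝓡 R ∪ (nab ∩ R) ⊆ G.verts :=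
    fun R hR => (hnsubR R).trans (hsub R hR)
  have hmemnabla : ∀ R ∈ 𝓡, ∀ w ∈ (H R).verts, w ∈ G.verts →
      w ∈ bdryIn 𝓡 R ∪ (nab ∩ R) := by
    intro R hR w hw hwG
    rw [← hHverts R hR]
    exact Finset.mem_inter.2 ⟨hw, hwG⟩
  have hGmem : ∀ R ∈ 𝓡, ∀ R1 ∈ 𝓡, R ≠ R1 → ∀ w, w ∈ (H R).verts →
      w ∈ (H R1).verts → w ∈ G.verts := by
    intro R hR R1 hR1 hne w h1 h2
    by_contra hG
    exact Finset.disjoint_left.1 (hHdisj R hR R1 hR1 hne)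
      (Finset.mem_sdiff.2 ⟨h1, hG⟩) (Finset.mem_sdiff.2 ⟨h2, hG⟩)
  have hbdry : ∀ R ∈ 𝓡, ∀ R1 ∈ 𝓡, R ≠ R1 → ∀ w, w ∈ R → w ∈ R1 →
      w ∈ bdryIn 𝓡 R ∪ (nab ∩ R) := by
    intro R hR R1 hR1 hne w h1 h2
    exact Finset.mem_union_left _ (Finset.mem_filter.2 ⟨h1, R1, hR1, hne.symm, h2⟩)
  have hrle : ∀ R : Finset U, G.G.restrictTo R ≤ G.G := fun R u v h => h.1
  have hHle : ∀ R ∈ 𝓡, (H R).G ≤ ⨆ R ∈ 𝓡, (H R).G :=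
    fun R hR => le_iSup₂ (f := fun (R : Finset U) (_ : R ∈ 𝓡) => (H R).G) R hR
  have fwd : ∀ {a w : U} (p : (⨆ R ∈ 𝓡, (H R).G).Walk a w),
      (∃ R' ∈ 𝓡, w ∈ bdryIn 𝓡 R' ∪ (nab ∩ R')) → ∀ R ∈ 𝓡, a ∈ (H R).verts →
      ∃ x ∈ bdryIn 𝓡 R ∪ (nab ∩ R), (H R).G.Reachable a x ∧ G.G.Reachable x w := by
    intro a w p
    induction p with
    | nil =>
      rintro ⟨R', hR', hw⟩ R hR ha
      exact ⟨_, hmemnabla R hR _ ha (hnsubG R' hR' hw), .refl _, .refl _⟩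
    | @cons a b w hab q ih =>
      intro hw R hR ha
      have hab' : ∃ R1 ∈ 𝓡, (H R1).G.Adj a b := by
        simpa using hab
      obtain ⟨R1, hR1, hadj⟩ := hab'
      have hbH : b ∈ (H R1).verts := ((H R1).support hadj).2
      have haH : a ∈ (H R1).verts := ((H R1).support hadj).1
      by_cases heq : R1 = R
      · subst heq
        obtain ⟨x, hx, hrx, hgx⟩ := ih hw R1 hR1 hbH
        exact ⟨x, hx, (SimpleGraph.Adj.reachable hadj).trans hrx, hgx⟩
      · have haG : a ∈ G.verts := hGmem R hR R1 hR1 (Ne.symm heq) a ha haH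
        have han : a ∈ bdryIn 𝓡 R ∪ (nab ∩ R) := hmemnabla R hR a ha haG
        have han1 : a ∈ bdryIn 𝓡 R1 ∪ (nab ∩ R1) := hmemnabla R1 hR1 a haH haG
        obtain ⟨x, hx, hrx, hgx⟩ := ih hw R1 hR1 hbH
        have hax : (H R1).G.Reachable a x := (SimpleGraph.Adj.reachable hadj).trans hrx
        have hax' : (G.G.restrictTo R1).Reachable a x := (hHconn R1 hR1 a han1 x hx).1 hax
        exact ⟨a, han, .refl _, (hax'.mono (hrle R1)).trans hgx⟩
  have bwd : ∀ {a w : U} (p : G.G.Walk a w),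
      (∃ R' ∈ 𝓡, w ∈ bdryIn 𝓡 R' ∪ (nab ∩ R')) → ∀ R ∈ 𝓡, a ∈ R →
      ∃ x ∈ bdryIn 𝓡 R ∪ (nab ∩ R), (G.G.restrictTo R).Reachable a x ∧
        (⨆ R ∈ 𝓡, (H R).G).Reachable x w := by
    intro a w p
    induction p with
    | nil =>
      rintro ⟨R', hR', hw⟩ R hR ha
      by_cases heq : R' = R
      · subst heq
        exact ⟨_, hw, .refl _, .refl _⟩
      · exact ⟨_, hbdry R hR R' hR' (Ne.symm heq) _ ha (hnsubR R' hw), .refl _, .refl _⟩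
    | @cons a b w hab q ih =>
      intro hw R hR ha
      obtain ⟨R1, hR1, haR1, hbR1⟩ := hedge hab
      by_cases heq : R1 = R
      · subst heq
        obtain ⟨x, hx, hrx, hgx⟩ := ih hw R1 hR1 hbR1
        exact ⟨x, hx, (SimpleGraph.Adj.reachable (show (G.G.restrictTo R1).Adj a b from ⟨hab, ha, hbR1⟩)).trans hrx, hgx⟩
      · have han1 : a ∈ bdryIn 𝓡 R1 ∪ (nab ∩ R1) :=
          hbdry R1 hR1 R hR heq a haR1 ha
        obtain ⟨x, hx, hrx, hgx⟩ := ih hw R1 hR1 hbR1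
        have hax : (G.G.restrictTo R1).Reachable a x :=
          (SimpleGraph.Adj.reachable (show (G.G.restrictTo R1).Adj a b from ⟨hab, haR1, hbR1⟩)).trans hrx
        have hH1 : (H R1).G.Reachable a x := (hHconn R1 hR1 a han1 x hx).2 hax
        exact ⟨a, hbdry R hR R1 hR1 (Ne.symm heq) a ha haR1, .refl _,
          (hH1.mono (hHle R1 hR1)).trans hgx⟩
  obtain ⟨Ru, hRu, hun⟩ := hu
  constructor
  · intro h
    obtain ⟨p⟩ := h
    have huH : u ∈ (H Ru).verts := by
      have h1 : u ∈ (H Ru).verts ∩ G.verts := by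
        rw [hHverts Ru hRu]; exact hun
      exact (Finset.mem_inter.1 h1).1
    obtain ⟨x, hx, hrx, hgx⟩ := fwd p hv Ru hRu huH
    have hux : (G.G.restrictTo Ru).Reachable u x := (hHconn Ru hRu u hun x hx).1 hrx
    exact (hux.mono (hrle Ru)).trans hgx
  · intro h
    obtain ⟨p⟩ := h
    obtain ⟨x, hx, hrx, hgx⟩ := bwd p hv Ru hRu (hnsubR Ru hun)
    have hux : (H Ru).G.Reachable u x := (hHconn Ru hRu u hun x hx).2 hrx
    exact (hux.mono (hHle Ru hRu)).trans hgx
end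

section
/- Let G be a finite simple graph with nonnegative edge weights, and for vertices u, v let d_G(u,v) denote the minimum total weight of a u–v path in G (∞ if u and v are not connected). Let 𝓡 be a finite family of subsets of V(G) such that every vertex lies in some region and every edge of G has both endpoints in a common region; for R ∈ 𝓡 let ∂(R) = R ∩ ⋃_{R' ∈ 𝓡, R' ≠ R} R', let M ⊆ V(G) be a set of marked vertices, and set ∇(R) = ∂(R) ∪ (M ∩ R). Let A be a weighted simple graph on the vertex set ⋃_{R ∈ 𝓡} ∇(R) with weight function w_A such that: (a) every edge uv of A has both endpoints in ∇(R) for some R ∈ 𝓡, and w_A(uv) ≥ d_G(u,v); and (b) there is a constant c ≥ 1 such that for every R ∈ 𝓡 and all u, v ∈ ∇(R): d_A(u,v) ≤ c · d_{G[R]}(u,v), where G[R] is the induced (weighted) subgraph on R. Then for all s, t ∈ ⋃_{R ∈ 𝓡} ∇(R): d_G(s,t) ≤ d_A(s,t) ≤ c · d_G(s,t). -/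
open scoped Classical ENNReal

/-- The weighted distance `d_G(u,v) ∈ [0,∞]`: the infimum of the total weight of a
`u`–`v` walk (`∞` if `u` and `v` are not connected). -/
noncomputable def wdist {U : Type} (G : SimpleGraph U) (w : Sym2 U → ℝ) (u v : U) : ℝ≥0∞ :=
  ⨅ p : G.Walk u v, (p.edges.map fun e => ENNReal.ofReal (w e)).sum

section helpers
variable {U : Type} (G : SimpleGraph U) (w : Sym2 U → ℝ)

lemma wdist_le_walk {u v : U} (p : G.Walk u v) :
    wdist G w u v ≤ (p.edges.map fun e => ENNReal.ofReal (w e)).sum :=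
  iInf_le _ p

lemma wdist_self_le (u : U) : wdist G w u u ≤ 0 := by
  simpa using wdist_le_walk G w (SimpleGraph.Walk.nil : G.Walk u u)

lemma wdist_triangle (u v t : U) :
    wdist G w u t ≤ wdist G w u v + wdist G w v t := by
  simp only [wdist, ENNReal.iInf_add]
  refine le_iInf fun p => ?_
  rw [ENNReal.add_iInf]
  refine le_iInf fun q => ?_
  refine le_trans (wdist_le_walk G w (p.append q)) ?_
  rw [SimpleGraph.Walk.edges_append, List.map_append, List.sum_append]

lemma wdist_adj {u v : U} (h : G.Adj u v) :
    wdist G w u v ≤ ENNReal.ofReal (w s(u, v)) := by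
  simpa using wdist_le_walk G w (SimpleGraph.Walk.cons h SimpleGraph.Walk.nil)

end helpers

/-- if `A` is a graph on `⋃_R ∇(R)` whose edges lie within some `∇(R)`
and overestimate `d_G`, and which is a `c`-spanner of `d_{G[R]}` on each `∇(R)`, then
`d_G(s,t) ≤ d_A(s,t) ≤ c·d_G(s,t)` for all `s, t ∈ ⋃_R ∇(R)`. -/
theorem spanner_of_regions {U : Type} [DecidableEq U]
    (G : FinGraph U) (w : Sym2 U → ℝ) (hw : ∀ e, 0 ≤ w e)
    (𝓡 : Finset (Finset U))
    (hsub : ∀ R ∈ 𝓡, R ⊆ G.verts)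
    (hcover : ∀ v ∈ G.verts, ∃ R ∈ 𝓡, v ∈ R)
    (hedge : ∀ ⦃u v⦄, G.G.Adj u v → ∃ R ∈ 𝓡, u ∈ R ∧ v ∈ R)
    (M : Finset U) (hM : M ⊆ G.verts)
    (A : FinGraph U) (wA : Sym2 U → ℝ) (hwA : ∀ e, 0 ≤ wA e)
    (hAverts : A.verts = 𝓡.biUnion fun R => bdryIn 𝓡 R ∪ (M ∩ R))
    (ha : ∀ ⦃u v⦄, A.G.Adj u v →
      (∃ R ∈ 𝓡, u ∈ bdryIn 𝓡 R ∪ (M ∩ R) ∧ v ∈ bdryIn 𝓡 R ∪ (M ∩ R)) ∧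
        wdist G.G w u v ≤ ENNReal.ofReal (wA s(u, v)))
    (c : ℝ) (hc : 1 ≤ c)
    (hb : ∀ R ∈ 𝓡, ∀ u ∈ bdryIn 𝓡 R ∪ (M ∩ R), ∀ v ∈ bdryIn 𝓡 R ∪ (M ∩ R),
      wdist A.G wA u v ≤ ENNReal.ofReal c * wdist (G.G.restrictTo R) w u v)
    (s t : U) (hs : s ∈ A.verts) (ht : t ∈ A.verts) :
    wdist G.G w s t ≤ wdist A.G wA s t ∧
      wdist A.G wA s t ≤ ENNReal.ofReal c * wdist G.G w s t := by
  -- a vertex of `A` lying in a region `R` lies in `∇(R)`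
  have hNabla : ∀ {v : U} {R : Finset U}, R ∈ 𝓡 → v ∈ R → v ∈ A.verts →
      v ∈ bdryIn 𝓡 R ∪ (M ∩ R) := by
    intro v R hR hvR hvA
    rw [hAverts, Finset.mem_biUnion] at hvA
    obtain ⟨R', hR', hv'⟩ := hvA
    rw [Finset.mem_union] at hv' ⊢
    rcases hv' with hb' | hm
    · simp only [bdryIn, Finset.mem_filter] at hb'
      obtain ⟨hvR', R₃, hR₃, hne₃, hvR₃⟩ := hb'
      left
      simp only [bdryIn, Finset.mem_filter]
      refine ⟨hvR, ?_⟩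
      by_cases hR'R : R' = R
      · exact ⟨R₃, hR₃, by rw [← hR'R]; exact hne₃, hvR₃⟩
      · exact ⟨R', hR', hR'R, hvR'⟩
    · right
      exact Finset.mem_inter.mpr ⟨(Finset.mem_inter.mp hm).1, hvR⟩
  have hbdryA : ∀ {v : U} {R : Finset U}, R ∈ 𝓡 → v ∈ bdryIn 𝓡 R → v ∈ A.verts := by
    intro v R hR hv
    rw [hAverts, Finset.mem_biUnion]
    exact ⟨R, hR, Finset.mem_union_left _ hv⟩
  constructor
  · -- lower bound: every walk in `A` has weight at least `d_G(s,t)`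
    have part1 : ∀ {x y : U} (p : A.G.Walk x y),
        wdist G.G w x y ≤ (p.edges.map fun e => ENNReal.ofReal (wA e)).sum := by
      intro x y p
      induction p with
      | nil => simpa using wdist_self_le G.G w _
      | cons h q ih =>
        rw [SimpleGraph.Walk.edges_cons, List.map_cons, List.sum_cons]
        exact le_trans (wdist_triangle G.G w _ _ _) (add_le_add (ha h).2 ih)
    exact le_iInf fun p => part1 p
  · -- upper bound
    have key : ∀ n : ℕ, ∀ (x : U) (p : G.G.Walk x t), p.length ≤ n → x ∈ A.verts →
        wdist A.G wA x t ≤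
          ENNReal.ofReal c * (p.edges.map fun e => ENNReal.ofReal (w e)).sum := by
      intro n
      induction n with
      | zero =>
        intro x p hlen hx
        cases p with
        | nil => simpa using wdist_self_le A.G wA _
        | cons h q => simp at hlen
      | succ n ihn =>
        intro x p hlen hx
        cases p with
        | nil => simpa using wdist_self_le A.G wA _
        | @cons _ y₀ _ h q₀ =>
          obtain ⟨R, hR, hxR, hyR⟩ := hedge h
          have hxN : x ∈ bdryIn 𝓡 R ∪ (M ∩ R) := hNabla hR hxR hx
          have hq₀len : q₀.length ≤ n := by
            simpa [SimpleGraph.Walk.length_cons] using hlen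
          have L2 : ∀ (y u : U) (q : G.G.Walk y u), u = t → q.length ≤ n → y ∈ R →
              wdist A.G wA x t ≤ ENNReal.ofReal c *
                (wdist (G.G.restrictTo R) w x y +
                  (q.edges.map fun e => ENNReal.ofReal (w e)).sum) := by
            intro y u q
            induction q with
            | nil =>
              rintro rfl _ hyR'
              have := hb R hR x hxN _ (hNabla hR hyR' ht)
              simpa using this
            | @cons y z u h' q' ih' =>
              rintro rfl hlen' hyR'
              simp only [SimpleGraph.Walk.edges_cons, List.map_cons, List.sum_cons]
              by_cases hz : z ∈ R
              · have hadj : (G.G.restrictTo R).Adj y z := ⟨h', hyR', hz⟩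
                have hq'len : q'.length ≤ n :=
                  le_trans (Nat.le_succ _) (by simpa [SimpleGraph.Walk.length_cons] using hlen')
                have step : wdist (G.G.restrictTo R) w x z ≤
                    wdist (G.G.restrictTo R) w x y + ENNReal.ofReal (w s(y, z)) :=
                  le_trans (wdist_triangle _ w x y z)
                    (add_le_add_right (wdist_adj _ w hadj) _)
                calc wdist A.G wA x u
                    ≤ ENNReal.ofReal c * (wdist (G.G.restrictTo R) w x z +
                        (q'.edges.map fun e => ENNReal.ofReal (w e)).sum) :=
                      ih' rfl hq'len hz
                  _ ≤ ENNReal.ofReal c * ((wdist (G.G.restrictTo R) w x y +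
                        ENNReal.ofReal (w s(y, z))) +
                        (q'.edges.map fun e => ENNReal.ofReal (w e)).sum) :=
                      mul_le_mul_right (add_le_add_left step _) _
                  _ = ENNReal.ofReal c * (wdist (G.G.restrictTo R) w x y +
                        (ENNReal.ofReal (w s(y, z)) +
                          (q'.edges.map fun e => ENNReal.ofReal (w e)).sum)) := by
                      rw [add_assoc]
              · obtain ⟨R₂, hR₂, hyR₂, hzR₂⟩ := hedge h'
                have hne : R₂ ≠ R := fun e => hz (e ▸ hzR₂)
                have hybR : y ∈ bdryIn 𝓡 R :=
                  Finset.mem_filter.mpr ⟨hyR', R₂, hR₂, hne, hyR₂⟩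
                have hybR₂ : y ∈ bdryIn 𝓡 R₂ :=
                  Finset.mem_filter.mpr ⟨hyR₂, R, hR, hne.symm, hyR'⟩
                have hyA : y ∈ A.verts := hbdryA hR₂ hybR₂
                have hAyt := ihn y (SimpleGraph.Walk.cons h' q') hlen' hyA
                rw [SimpleGraph.Walk.edges_cons, List.map_cons, List.sum_cons] at hAyt
                have hAxy := hb R hR x hxN y (Finset.mem_union_left _ hybR)
                calc wdist A.G wA x u
                    ≤ wdist A.G wA x y + wdist A.G wA y u := wdist_triangle A.G wA x y u
                  _ ≤ ENNReal.ofReal c * wdist (G.G.restrictTo R) w x y +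
                      ENNReal.ofReal c * (ENNReal.ofReal (w s(y, z)) +
                        (q'.edges.map fun e => ENNReal.ofReal (w e)).sum) :=
                      add_le_add hAxy hAyt
                  _ = ENNReal.ofReal c * (wdist (G.G.restrictTo R) w x y +
                      (ENNReal.ofReal (w s(y, z)) +
                        (q'.edges.map fun e => ENNReal.ofReal (w e)).sum)) :=
                      (mul_add _ _ _).symm
          have h2 := L2 y₀ t q₀ rfl hq₀len hyR
          have h3 : wdist (G.G.restrictTo R) w x y₀ ≤ ENNReal.ofReal (w s(x, y₀)) :=
            wdist_adj _ w ⟨h, hxR, hyR⟩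
          rw [SimpleGraph.Walk.edges_cons, List.map_cons, List.sum_cons]
          exact le_trans h2 (mul_le_mul_right (add_le_add_left h3 _) _)
    have hc0 : (ENNReal.ofReal c) ≠ 0 := by
      simp [ENNReal.ofReal_eq_zero]; linarith
    rcases isEmpty_or_nonempty (G.G.Walk s t) with he | hne
    · have : wdist G.G w s t = ⊤ := by
        simp [wdist, iInf_of_empty]
      rw [this, ENNReal.mul_top hc0]
      exact le_top
    · conv_rhs => rw [wdist]
      rw [ENNReal.mul_iInf_of_ne hc0 ENNReal.ofReal_ne_top]
      exact le_iInf fun p => key p.length s p le_rfl hs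
end
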